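/- Let C be a function clone on a set Ω (with the pointwise convergence topology) that contains all constant unary functions. Then every clone isomorphism ξ from C onto a closed function clone D on a set Ω' is an open map. -/
import Mathlib


/-- A function clone on Ω. -/
def IsClone {Ω : Type*} (C : ∀ n : ℕ, Set ((Fin n → Ω) → Ω)) : Prop :=
  (∀ (n : ℕ) (i : Fin n), (fun x : Fin n → Ω => x i) ∈ C n) ∧
  (∀ (n m : ℕ) (f : (Fin n → Ω) → Ω), f ∈ C n → ∀ g : Fin n → (Fin m → Ω) → Ω,
    (∀ i, g i ∈ C m) → (fun x : Fin m → Ω => f fun i => g i x) ∈ C m)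

/-- A clone homomorphism. -/
def IsCloneHom {Ω Ω' : Type*} (C : ∀ n : ℕ, Set ((Fin n → Ω) → Ω))
    (D : ∀ n : ℕ, Set ((Fin n → Ω') → Ω'))
    (ξ : ∀ n : ℕ, ((Fin n → Ω) → Ω) → ((Fin n → Ω') → Ω')) : Prop :=
  (∀ n : ℕ, Set.MapsTo (ξ n) (C n) (D n)) ∧
  (∀ (n : ℕ) (i : Fin n), ξ n (fun x => x i) = fun x => x i) ∧
  (∀ (n m : ℕ) (f : (Fin n → Ω) → Ω), f ∈ C n → ∀ g : Fin n → (Fin m → Ω) → Ω,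
    (∀ i, g i ∈ C m) →
    ξ m (fun x => f fun i => g i x) = fun x => ξ n f fun i => ξ m (g i) x)

/-- Let C be a function clone on Ω (pointwise convergence topology) containing
all constant unary functions. Then every clone isomorphism ξ from C onto a closed function
clone D is an open map. -/
theorem stmt_8 {Ω Ω' : Type*} [TopologicalSpace Ω] [DiscreteTopology Ω]
    [TopologicalSpace Ω'] [DiscreteTopology Ω']
    (C : ∀ n : ℕ, Set ((Fin n → Ω) → Ω)) (D : ∀ n : ℕ, Set ((Fin n → Ω') → Ω'))
    (hC : IsClone C) (hD : IsClone D)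
    (hDclosed : ∀ n : ℕ, IsClosed (D n))
    (hconst : ∀ a : Ω, (fun _ : Fin 1 → Ω => a) ∈ C 1)
    (ξ : ∀ n : ℕ, ((Fin n → Ω) → Ω) → ((Fin n → Ω') → Ω'))
    (hξ : IsCloneHom C D ξ)
    (hbij : ∀ n : ℕ, Function.Bijective (Set.MapsTo.restrict (ξ n) (C n) (D n) (hξ.1 n))) :
    ∀ n : ℕ, IsOpenMap (Set.MapsTo.restrict (ξ n) (C n) (D n) (hξ.1 n)) := by
  intro n
  -- ξ 1 maps constants to constant-like functions
  have hconst' : ∀ (a : Ω) (y y' : Fin 1 → Ω'),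
      ξ 1 (fun _ : Fin 1 → Ω => a) y = ξ 1 (fun _ : Fin 1 → Ω => a) y' := by
    intro a y y'
    have h2 := hξ.2.2 1 2 (fun _ : Fin 1 → Ω => a) (hconst a)
    have e0 := h2 (fun _ => fun x => x 0) (fun _ => hC.1 2 0)
    have e1 := h2 (fun _ => fun x => x 1) (fun _ => hC.1 2 1)
    have key2 : (fun x : Fin 2 → Ω' => ξ 1 (fun _ : Fin 1 → Ω => a)
          (fun _ : Fin 1 => ξ 2 (fun x : Fin 2 → Ω => x 0) x))
        = (fun x : Fin 2 → Ω' => ξ 1 (fun _ : Fin 1 → Ω => a)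
          (fun _ : Fin 1 => ξ 2 (fun x : Fin 2 → Ω => x 1) x)) := e0.symm.trans e1
    simp only [hξ.2.1 2 0, hξ.2.1 2 1] at key2
    have hx := congrFun key2 ![y 0, y' 0]
    simp only [Matrix.cons_val_zero, Matrix.cons_val_one, Matrix.head_cons] at hx
    have hy : y = fun _ => y 0 := funext fun i => by rw [Subsingleton.elim i 0]
    have hy' : y' = fun _ => y' 0 := funext fun i => by rw [Subsingleton.elim i 0]
    rw [hy, hy']
    exact hx
  have hinj1 : ∀ f g, f ∈ C 1 → g ∈ C 1 → ξ 1 f = ξ 1 g → f = g := by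
    intro f g hf hg h
    have := (hbij 1).1 (a₁ := ⟨f, hf⟩) (a₂ := ⟨g, hg⟩) (Subtype.ext h)
    exact congrArg Subtype.val this
  -- key equivalence
  have hval : ∀ (f : (Fin n → Ω) → Ω), f ∈ C n → ∀ (a : Fin n → Ω) (b : Ω),
      (f a = b ↔ (fun y : Fin 1 → Ω' => ξ n f (fun i => ξ 1 (fun _ : Fin 1 → Ω => a i) y))
        = ξ 1 (fun _ : Fin 1 → Ω => b)) := by
    intro f hf a b
    have hcomp : ξ 1 (fun _ : Fin 1 → Ω => f a)
        = fun y : Fin 1 → Ω' => ξ n f (fun i => ξ 1 (fun _ : Fin 1 → Ω => a i) y) :=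
      hξ.2.2 n 1 f hf (fun i => fun _ => a i) (fun i => hconst (a i))
    constructor
    · intro h
      rw [← hcomp, h]
    · intro h
      rw [← hcomp] at h
      have := hinj1 _ _ (hconst (f a)) (hconst b) h
      exact congrFun this (fun _ => b)
  set e := Equiv.ofBijective _ (hbij n) with he
  have hrw : ∀ g : D n, ξ n ((e.symm g : C n) : (Fin n → Ω) → Ω) = (g : (Fin n → Ω') → Ω') := by
    intro g
    exact congrArg Subtype.val (e.apply_symm_apply g)
  have hcont : Continuous (fun g : D n => ((e.symm g : C n) : (Fin n → Ω) → Ω)) := by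
    apply continuous_pi
    intro a
    rw [continuous_discrete_rng]
    intro b
    by_cases hne : Nonempty (Fin 1 → Ω')
    · obtain ⟨y₀⟩ := hne
      have hset : (fun g : D n => ((e.symm g : C n) : (Fin n → Ω) → Ω) a) ⁻¹' {b}
          = (fun g : D n => (g : (Fin n → Ω') → Ω')
              (fun i => ξ 1 (fun _ : Fin 1 → Ω => a i) y₀)) ⁻¹' {ξ 1 (fun _ : Fin 1 → Ω => b) y₀} := by
        ext g
        simp only [Set.mem_preimage, Set.mem_singleton_iff]
        rw [hval _ (e.symm g).2 a b, hrw g]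
        constructor
        · intro h
          exact congrFun h y₀
        · intro h
          funext y
          calc (g : (Fin n → Ω') → Ω') (fun i => ξ 1 (fun _ : Fin 1 → Ω => a i) y)
              = (g : (Fin n → Ω') → Ω') (fun i => ξ 1 (fun _ : Fin 1 → Ω => a i) y₀) :=
                congrArg _ (funext fun i => hconst' (a i) y y₀)
            _ = ξ 1 (fun _ : Fin 1 → Ω => b) y₀ := h
            _ = ξ 1 (fun _ : Fin 1 → Ω => b) y := hconst' b y₀ y
      rw [hset]
      exact IsOpen.preimage
        (((continuous_apply _).comp continuous_subtype_val)) (isOpen_discrete _)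
    · have hset : (fun g : D n => ((e.symm g : C n) : (Fin n → Ω) → Ω) a) ⁻¹' {b} = Set.univ := by
        ext g
        simp only [Set.mem_preimage, Set.mem_singleton_iff, Set.mem_univ, iff_true]
        rw [hval _ (e.symm g).2 a b, hrw g]
        funext y
        exact absurd ⟨y⟩ hne
      rw [hset]
      exact isOpen_univ
  have hcont' : Continuous (fun g : D n => e.symm g) := hcont.subtype_mk _
  intro U hU
  have himg : Set.MapsTo.restrict (ξ n) (C n) (D n) (hξ.1 n) '' U
      = (fun g : D n => e.symm g) ⁻¹' U := by
    ext g
    simp only [Set.mem_image, Set.mem_preimage]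
    constructor
    · rintro ⟨x, hx, rfl⟩
      have : e.symm (e x) = x := e.symm_apply_apply x
      rwa [show e.symm (Set.MapsTo.restrict (ξ n) (C n) (D n) (hξ.1 n) x) = x from this]
    · intro h
      exact ⟨e.symm g, h, e.apply_symm_apply g⟩
  rw [himg]
  exact hcont'.isOpen_preimage U hU
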